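/- Suppose L = {u_1,...,u_k} is a dominant subset of G(I) where x_j is a dominant variable for u_j (j = 1,...,k), and suppose that for every w ∈ G(I) \ L there exists t ∈ {1,...,k} with deg_{x_t}(w) ≥ deg_{x_t}(u_t). Then no element of G(I) strongly divides lcm(L). -/
import Mathlib


/-- Let `G` be the minimal monomial generating set of a (proper) monomial ideal in
`K[x_1,…,x_n]` (an antichain of nonzero exponent vectors).  Suppose
`L = {u₁,…,u_k} ⊆ G` is a dominant set in which `x_j` is a dominant variable for `u_j`
(`j = 1,…,k ≤ n`), and for every `w ∈ G \ L` there exists `t` with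
`deg_{x_t}(w) ≥ deg_{x_t}(u_t)`.  Then no element of `G` strongly divides `lcm L`. -/
theorem no_strong_divisor_of_lcm {n k : ℕ} (hk : k ≤ n)
    (G : Finset (Fin n → ℕ))
    (hmin : ∀ u ∈ G, ∀ v ∈ G, u ≤ v → u = v)
    (h0 : ∀ g ∈ G, g ≠ 0)
    (u : Fin k → (Fin n → ℕ)) (huinj : Function.Injective u) (huG : ∀ j, u j ∈ G)
    (hdom : ∀ j l : Fin k, l ≠ j → u l (Fin.castLE hk j) < u j (Fin.castLE hk j))
    (hcover : ∀ w ∈ G, (∀ j : Fin k, w ≠ u j) →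
      ∃ t : Fin k, u t (Fin.castLE hk t) ≤ w (Fin.castLE hk t)) :
    ∀ g ∈ G, ¬ (∀ a : Fin n, g a ≠ 0 → g a < Finset.univ.sup (fun j : Fin k => u j a)) := by
  intro g hg hstrong
  have hsupdom : ∀ t : Fin k,
      Finset.univ.sup (fun l : Fin k => u l (Fin.castLE hk t)) = u t (Fin.castLE hk t) := by
    intro t
    apply le_antisymm
    · apply Finset.sup_le
      intro l _
      rcases eq_or_ne l t with rfl | h
      · exact le_rfl
      · exact (hdom t l h).le
    · exact Finset.le_sup (f := fun l : Fin k => u l (Fin.castLE hk t)) (Finset.mem_univ t)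
  have huniq : ∀ t : Fin k, u t (Fin.castLE hk t) = 0 → ∀ l : Fin k, l = t := by
    intro t ht l
    by_contra hl
    have := hdom t l hl
    omega
  by_cases hgu : ∃ j, g = u j
  · obtain ⟨j, rfl⟩ := hgu
    rcases Nat.eq_zero_or_pos (u j (Fin.castLE hk j)) with hz | hpos
    · obtain ⟨b, hb⟩ := Function.ne_iff.mp (h0 _ (huG j))
      have hb' : u j b ≠ 0 := by simpa using hb
      have hlt := hstrong b hb'
      have hsup : Finset.univ.sup (fun l : Fin k => u l b) = u j b := by
        apply le_antisymm
        · apply Finset.sup_le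
          intro l _
          rw [huniq j hz l]
        · exact Finset.le_sup (f := fun l : Fin k => u l b) (Finset.mem_univ j)
      omega
    · have hlt := hstrong _ (hpos.ne')
      rw [hsupdom j] at hlt
      exact absurd hlt (lt_irrefl _)
  · push_neg at hgu
    obtain ⟨t, ht⟩ := hcover g hg hgu
    rcases Nat.eq_zero_or_pos (g (Fin.castLE hk t)) with hz | hpos
    · have htz : u t (Fin.castLE hk t) = 0 := Nat.le_zero.mp (hz ▸ ht)
      have hle : g ≤ u t := by
        intro b
        rcases Nat.eq_zero_or_pos (g b) with hb | hb
        · exact hb ▸ Nat.zero_le _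
        · have hlt := hstrong b (hb.ne')
          have hsup : Finset.univ.sup (fun l : Fin k => u l b) = u t b := by
            apply le_antisymm
            · apply Finset.sup_le
              intro l _
              rw [huniq t htz l]
            · exact Finset.le_sup (f := fun l : Fin k => u l b) (Finset.mem_univ t)
          rw [hsup] at hlt
          exact hlt.le
      exact hgu t (hmin g hg (u t) (huG t) hle)
    · have hlt := hstrong _ (hpos.ne')
      rw [hsupdom t] at hlt
      exact absurd hlt (Nat.not_lt.mpr ht)
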